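/- Let S be a semigroup with exactly n minimal left ideals, where 2 ≤ n < ∞. Then the clique number of the intersection ideal graph Γ(S) equals n if and only if one of the following holds: (i) n = 3 and S = I₁ ∪ I₂ ∪ I₃, where I₁, I₂, I₃ are the three minimal left ideals of S; or (ii) n = 2, and S has exactly two minimal left ideals I₁, I₂ together with a unique maximal left ideal, namely I₁ ∪ I₂. -/

import Mathlib

/-- `I` is a left ideal of the semigroup `S`: a nonempty subset closed under
left multiplication by arbitrary elements of `S`. -/
def IsLeftIdeal (S : Type*) [Semigroup S] (I : Set S) : Prop :=
  I.Nonempty ∧ ∀ s : S, ∀ x ∈ I, s * x ∈ I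

/-- `I` is a nontrivial left ideal of `S`: a left ideal with `I ≠ S`. -/
def IsNontrivialLeftIdeal (S : Type*) [Semigroup S] (I : Set S) : Prop :=
  IsLeftIdeal S I ∧ I ≠ Set.univ

/-- `I` is a minimal left ideal of `S`: a nontrivial left ideal properly
containing no left ideal of `S`. -/
def IsMinimalLeftIdeal (S : Type*) [Semigroup S] (I : Set S) : Prop :=
  IsNontrivialLeftIdeal S I ∧ ∀ J : Set S, IsLeftIdeal S J → ¬ J ⊂ I

/-- `I` is a maximal left ideal of `S`: a nontrivial left ideal not properly
contained in any nontrivial left ideal of `S`. -/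
def IsMaximalLeftIdeal (S : Type*) [Semigroup S] (I : Set S) : Prop :=
  IsNontrivialLeftIdeal S I ∧ ∀ J : Set S, IsNontrivialLeftIdeal S J → ¬ I ⊂ J

/-- The intersection ideal graph `Γ(S)`: vertices are the nontrivial left ideals of `S`,
two distinct vertices being adjacent iff their intersection is nonempty. -/
def idealGraph (S : Type*) [Semigroup S] :
    SimpleGraph {I : Set S // IsNontrivialLeftIdeal S I} where
  Adj I J := I ≠ J ∧ (I.1 ∩ J.1).Nonempty
  symm := by
    refine ⟨?_⟩
    rintro I J ⟨h1, h2⟩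
    exact ⟨h1.symm, by rwa [Set.inter_comm]⟩
  loopless := by refine ⟨?_⟩; rintro I ⟨h1, -⟩; exact h1 rfl

/-- The clique number of `Γ(S)`: the supremum of cardinalities of sets of pairwise
adjacent vertices. -/
noncomputable def cliqueNumber (S : Type*) [Semigroup S] : ℕ∞ :=
  sSup {k : ℕ∞ | ∃ C : Set {I : Set S // IsNontrivialLeftIdeal S I},
    (idealGraph S).IsClique C ∧ C.encard = k}

section Aux

variable {S : Type*} [Semigroup S]

lemma li_inter {I J : Set S} (hI : IsLeftIdeal S I) (hJ : IsLeftIdeal S J)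
    (h : (I ∩ J).Nonempty) : IsLeftIdeal S (I ∩ J) :=
  ⟨h, fun s x hx => ⟨hI.2 s x hx.1, hJ.2 s x hx.2⟩⟩

lemma li_union {I J : Set S} (hI : IsLeftIdeal S I) (hJ : IsLeftIdeal S J) :
    IsLeftIdeal S (I ∪ J) :=
  ⟨hI.1.mono Set.subset_union_left,
   fun s x hx => hx.elim (fun h => Or.inl (hI.2 s x h)) (fun h => Or.inr (hJ.2 s x h))⟩

/-- a minimal ideal meeting a left ideal is contained in it -/
lemma min_subset_of_meet {I J : Set S} (hI : IsMinimalLeftIdeal S I) (hJ : IsLeftIdeal S J)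
    (h : (I ∩ J).Nonempty) : I ⊆ J := by
  have hli := li_inter hI.1.1 hJ h
  have heq : I ∩ J = I := by
    by_contra hne
    exact hI.2 _ hli ⟨Set.inter_subset_left, fun hsub => hne (Set.Subset.antisymm Set.inter_subset_left (Set.subset_inter (le_refl I) ((Set.subset_inter_iff.mp hsub).2)))⟩
  intro x hx
  rw [← heq] at hx
  exact hx.2

lemma min_disjoint {I J : Set S} (hI : IsMinimalLeftIdeal S I) (hJ : IsMinimalLeftIdeal S J)
    (hne : I ≠ J) : I ∩ J = ∅ := by
  by_contra h
  have hne' : (I ∩ J).Nonempty := Set.nonempty_iff_ne_empty.mpr h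
  have h1 := min_subset_of_meet hI hJ.1.1 hne'
  have h2 := min_subset_of_meet hJ hI.1.1 (by rwa [Set.inter_comm])
  exact hne (Set.Subset.antisymm h1 h2)

/-- lower bound on clique number from a family of pairwise intersecting nontrivial ideals -/
lemma le_cliqueNumber {A : Set (Set S)} (hA : ∀ I ∈ A, IsNontrivialLeftIdeal S I)
    (hadj : ∀ I ∈ A, ∀ J ∈ A, I ≠ J → (I ∩ J).Nonempty) :
    A.encard ≤ cliqueNumber S := by
  set C : Set {I : Set S // IsNontrivialLeftIdeal S I} := Subtype.val ⁻¹' A with hC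
  have henc : C.encard = A.encard := by
    apply Set.encard_preimage_of_injective_subset_range Subtype.val_injective
    rw [Subtype.range_coe_subtype]
    exact hA
  apply le_sSup
  refine ⟨C, ?_, henc⟩
  intro v hv w hw hvw
  refine ⟨hvw, hadj v.1 hv w.1 hw ?_⟩
  exact fun h => hvw (Subtype.ext h)

lemma cliqueNumber_le {m : ℕ∞}
    (h : ∀ C : Set {I : Set S // IsNontrivialLeftIdeal S I},
      (idealGraph S).IsClique C → C.encard ≤ m) : cliqueNumber S ≤ m := by
  apply sSup_le
  rintro k ⟨C, hC, rfl⟩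
  exact h C hC

end Aux

set_option maxRecDepth 10000 in
lemma key3 : ∀ F : Finset (Bool × Bool × Bool),
    (false, false, false) ∉ F → (true, true, true) ∉ F →
    (∀ x ∈ F, ∀ y ∈ F, (x.1 && y.1 || x.2.1 && y.2.1 || x.2.2 && y.2.2) = true) →
    F.card ≤ 3 := by decide


section Case3
variable {S : Type*} [Semigroup S]

open Classical in
lemma case3 (I1 I2 I3 : Set S) (h1 : IsMinimalLeftIdeal S I1) (h2 : IsMinimalLeftIdeal S I2)
    (h3 : IsMinimalLeftIdeal S I3) (h12 : I1 ≠ I2) (h13 : I1 ≠ I3) (h23 : I2 ≠ I3) :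
    cliqueNumber S = 3 ↔ I1 ∪ I2 ∪ I3 = Set.univ := by
  have d12 : I1 ∩ I2 = ∅ := min_disjoint h1 h2 h12
  have d13 : I1 ∩ I3 = ∅ := min_disjoint h1 h3 h13
  have d23 : I2 ∩ I3 = ∅ := min_disjoint h2 h3 h23
  obtain ⟨x1, hx1⟩ := h1.1.1.1
  obtain ⟨x2, hx2⟩ := h2.1.1.1
  obtain ⟨x3, hx3⟩ := h3.1.1.1
  have hx21 : x2 ∉ I1 := fun h => absurd (d12 ▸ (⟨h, hx2⟩ : x2 ∈ I1 ∩ I2)) (Set.notMem_empty x2)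
  have hx31 : x3 ∉ I1 := fun h => absurd (d13 ▸ (⟨h, hx3⟩ : x3 ∈ I1 ∩ I3)) (Set.notMem_empty x3)
  have hx12 : x1 ∉ I2 := fun h => absurd (d12 ▸ (⟨hx1, h⟩ : x1 ∈ I1 ∩ I2)) (Set.notMem_empty x1)
  have hx32 : x3 ∉ I2 := fun h => absurd (d23 ▸ (⟨h, hx3⟩ : x3 ∈ I2 ∩ I3)) (Set.notMem_empty x3)
  have hx13 : x1 ∉ I3 := fun h => absurd (d13 ▸ (⟨hx1, h⟩ : x1 ∈ I1 ∩ I3)) (Set.notMem_empty x1)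
  have hx23 : x2 ∉ I3 := fun h => absurd (d23 ▸ (⟨hx2, h⟩ : x2 ∈ I2 ∩ I3)) (Set.notMem_empty x2)
  constructor
  · -- cliqueNumber = 3 → union = univ
    intro hcn
    by_contra hU
    -- build a 4-clique
    set A : Set (Set S) := {I1, I1 ∪ I2, I1 ∪ I3, I1 ∪ I2 ∪ I3} with hA
    have hsubU : ∀ E ∈ A, E ⊆ I1 ∪ I2 ∪ I3 := by
      intro E hE
      rcases hE with rfl | rfl | rfl | rfl <;> intro x hx <;>
        simp only [Set.mem_union] at hx ⊢ <;> tauto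
    have hnt : ∀ E ∈ A, IsNontrivialLeftIdeal S E := by
      intro E hE
      refine ⟨?_, ?_⟩
      · rcases hE with rfl | rfl | rfl | rfl
        · exact h1.1.1
        · exact li_union h1.1.1 h2.1.1
        · exact li_union h1.1.1 h3.1.1
        · exact li_union (li_union h1.1.1 h2.1.1) h3.1.1
      · intro hEu
        exact hU (Set.eq_univ_of_univ_subset (hEu ▸ hsubU E hE))
    have hI1sub : ∀ E ∈ A, I1 ⊆ E := by
      intro E hE
      rcases hE with rfl | rfl | rfl | rfl
      · exact le_refl _
      · exact Set.subset_union_left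
      · exact Set.subset_union_left
      · exact Set.subset_union_left.trans Set.subset_union_left
    have hadj : ∀ E ∈ A, ∀ F ∈ A, E ≠ F → (E ∩ F).Nonempty :=
      fun E hE F hF _ => ⟨x1, hI1sub E hE hx1, hI1sub F hF hx1⟩
    have hle := le_cliqueNumber hnt hadj
    have mem_ne : ∀ {A B : Set S} (x : S), x ∈ B → x ∉ A → A ≠ B :=
      fun x hx hnx h => hnx (h ▸ hx)
    have nmu : ∀ {A B : Set S} {x : S}, x ∉ A → x ∉ B → x ∉ A ∪ B :=
      fun hA hB h => h.elim hA hB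
    have n1 : I1 ≠ I1 ∪ I2 := mem_ne x2 (Or.inr hx2) hx21
    have n2 : I1 ≠ I1 ∪ I3 := mem_ne x3 (Or.inr hx3) hx31
    have n3 : I1 ≠ I1 ∪ I2 ∪ I3 := mem_ne x3 (Or.inr hx3) hx31
    have n4 : I1 ∪ I2 ≠ I1 ∪ I3 := mem_ne x3 (Or.inr hx3) (nmu hx31 hx32)
    have n5 : I1 ∪ I2 ≠ I1 ∪ I2 ∪ I3 := mem_ne x3 (Or.inr hx3) (nmu hx31 hx32)
    have n6 : I1 ∪ I3 ≠ I1 ∪ I2 ∪ I3 := mem_ne x2 (Or.inl (Or.inr hx2)) (nmu hx21 hx23)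
    have hcardA : A.encard = 4 := by
      rw [hA]
      rw [Set.encard_insert_of_notMem, Set.encard_insert_of_notMem,
        Set.encard_insert_of_notMem, Set.encard_singleton]
      · rfl
      · simp only [Set.mem_singleton_iff]; exact n6
      · simp only [Set.mem_insert_iff, Set.mem_singleton_iff]; push_neg; exact ⟨n4, n5⟩
      · simp only [Set.mem_insert_iff, Set.mem_singleton_iff]; push_neg; exact ⟨n1, n2, n3⟩
    rw [hcardA, hcn] at hle
    norm_num at hle
  · -- union = univ → cliqueNumber = 3
    intro hU
    have hcov : ∀ J : Set S, IsLeftIdeal S J → ∀ x ∈ J,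
        (I1 ⊆ J ∧ x ∈ I1) ∨ (I2 ⊆ J ∧ x ∈ I2) ∨ (I3 ⊆ J ∧ x ∈ I3) := by
      intro J hJ x hx
      have : x ∈ I1 ∪ I2 ∪ I3 := hU ▸ Set.mem_univ x
      rcases this with (h | h) | h
      · exact Or.inl ⟨min_subset_of_meet h1 hJ ⟨x, h, hx⟩, h⟩
      · exact Or.inr (Or.inl ⟨min_subset_of_meet h2 hJ ⟨x, h, hx⟩, h⟩)
      · exact Or.inr (Or.inr ⟨min_subset_of_meet h3 hJ ⟨x, h, hx⟩, h⟩)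
    apply le_antisymm
    · -- upper bound
      apply cliqueNumber_le
      intro C hC
      set t : {I : Set S // IsNontrivialLeftIdeal S I} → Bool × Bool × Bool :=
        fun v => (decide (I1 ⊆ v.1), decide (I2 ⊆ v.1), decide (I3 ⊆ v.1)) with ht
      have htinj : Function.Injective t := by
        intro v w hvw
        have hsub : ∀ a b : {I : Set S // IsNontrivialLeftIdeal S I}, t a = t b → a.1 ⊆ b.1 := by
          intro a b hab x hx
          rcases hcov a.1 a.2.1 x hx with ⟨hs, hm⟩ | ⟨hs, hm⟩ | ⟨hs, hm⟩
          · have hcomp : decide (I1 ⊆ a.1) = decide (I1 ⊆ b.1) := congrArg Prod.fst hab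
            exact (of_decide_eq_true (hcomp ▸ decide_eq_true hs)) hm
          · have hcomp : decide (I2 ⊆ a.1) = decide (I2 ⊆ b.1) :=
              congrArg (fun p : Bool × Bool × Bool => p.2.1) hab
            exact (of_decide_eq_true (hcomp ▸ decide_eq_true hs)) hm
          · have hcomp : decide (I3 ⊆ a.1) = decide (I3 ⊆ b.1) :=
              congrArg (fun p : Bool × Bool × Bool => p.2.2) hab
            exact (of_decide_eq_true (hcomp ▸ decide_eq_true hs)) hm
        exact Subtype.ext (Set.Subset.antisymm (hsub v w hvw) (hsub w v hvw.symm))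
      have himg : C.encard = (t '' C).encard := (Set.InjOn.encard_image (htinj.injOn)).symm
      have hfin : (t '' C).Finite := Set.toFinite _
      rw [himg, hfin.encard_eq_coe_toFinset_card]
      have hcard := key3 hfin.toFinset ?_ ?_ ?_
      · exact_mod_cast Nat.cast_le.mpr hcard
      · -- (false,false,false) not in
        rw [Set.Finite.mem_toFinset]
        rintro ⟨v, hv, hveq⟩
        obtain ⟨x, hx⟩ := v.2.1.1
        rcases hcov v.1 v.2.1 x hx with ⟨hs, _⟩ | ⟨hs, _⟩ | ⟨hs, _⟩
        · have hcomp : decide (I1 ⊆ v.1) = false := congrArg Prod.fst hveq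
          rw [decide_eq_true hs] at hcomp; exact Bool.noConfusion hcomp
        · have hcomp : decide (I2 ⊆ v.1) = false :=
            congrArg (fun p : Bool × Bool × Bool => p.2.1) hveq
          rw [decide_eq_true hs] at hcomp; exact Bool.noConfusion hcomp
        · have hcomp : decide (I3 ⊆ v.1) = false :=
            congrArg (fun p : Bool × Bool × Bool => p.2.2) hveq
          rw [decide_eq_true hs] at hcomp; exact Bool.noConfusion hcomp
      · -- (true,true,true) not in
        rw [Set.Finite.mem_toFinset]
        rintro ⟨v, hv, hveq⟩
        have hs1 : I1 ⊆ v.1 := of_decide_eq_true (congrArg Prod.fst hveq)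
        have hs2 : I2 ⊆ v.1 := of_decide_eq_true (congrArg (fun p : Bool × Bool × Bool => p.2.1) hveq)
        have hs3 : I3 ⊆ v.1 := of_decide_eq_true (congrArg (fun p : Bool × Bool × Bool => p.2.2) hveq)
        exact v.2.2 (Set.eq_univ_of_univ_subset (hU ▸ Set.union_subset (Set.union_subset hs1 hs2) hs3))
      · -- pairwise sharing
        intro a ha b hb
        rw [Set.Finite.mem_toFinset] at ha hb
        obtain ⟨v, hv, rfl⟩ := ha
        obtain ⟨w, hw, rfl⟩ := hb
        have hmeet : (v.1 ∩ w.1).Nonempty := by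
          by_cases hvw : v = w
          · subst hvw; obtain ⟨x, hx⟩ := v.2.1.1; exact ⟨x, hx, hx⟩
          · exact (hC hv hw hvw).2
        obtain ⟨x, hxv, hxw⟩ := hmeet
        rcases hcov v.1 v.2.1 x hxv with ⟨hs, hm⟩ | ⟨hs, hm⟩ | ⟨hs, hm⟩
        · have hsw : I1 ⊆ w.1 := min_subset_of_meet h1 w.2.1 ⟨x, hm, hxw⟩
          simp only [ht, decide_eq_true hs, decide_eq_true hsw, Bool.true_and, Bool.true_or]
        · have hsw : I2 ⊆ w.1 := min_subset_of_meet h2 w.2.1 ⟨x, hm, hxw⟩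
          simp only [ht, decide_eq_true hs, decide_eq_true hsw]
          simp
        · have hsw : I3 ⊆ w.1 := min_subset_of_meet h3 w.2.1 ⟨x, hm, hxw⟩
          simp only [ht, decide_eq_true hs, decide_eq_true hsw]
          simp
    · -- lower bound: 3-clique
      set A : Set (Set S) := {I1 ∪ I2, I1 ∪ I3, I2 ∪ I3} with hA
      have hnt : ∀ E ∈ A, IsNontrivialLeftIdeal S E := by
        intro E hE
        rcases hE with rfl | rfl | rfl
        · exact ⟨li_union h1.1.1 h2.1.1, fun h => (h ▸ (Set.mem_univ x3) : x3 ∈ I1 ∪ I2).elim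
            (fun hh => hx31 hh) (fun hh => hx32 hh)⟩
        · exact ⟨li_union h1.1.1 h3.1.1, fun h => (h ▸ (Set.mem_univ x2) : x2 ∈ I1 ∪ I3).elim
            (fun hh => hx21 hh) (fun hh => hx23 hh)⟩
        · exact ⟨li_union h2.1.1 h3.1.1, fun h => (h ▸ (Set.mem_univ x1) : x1 ∈ I2 ∪ I3).elim
            (fun hh => hx12 hh) (fun hh => hx13 hh)⟩
      have hadj : ∀ E ∈ A, ∀ F ∈ A, E ≠ F → (E ∩ F).Nonempty := by
        intro E hE F hF _
        rcases hE with rfl | rfl | rfl <;> rcases hF with rfl | rfl | rfl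
        · exact ⟨x1, Or.inl hx1, Or.inl hx1⟩
        · exact ⟨x1, Or.inl hx1, Or.inl hx1⟩
        · exact ⟨x2, Or.inr hx2, Or.inl hx2⟩
        · exact ⟨x1, Or.inl hx1, Or.inl hx1⟩
        · exact ⟨x1, Or.inl hx1, Or.inl hx1⟩
        · exact ⟨x3, Or.inr hx3, Or.inr hx3⟩
        · exact ⟨x2, Or.inl hx2, Or.inr hx2⟩
        · exact ⟨x3, Or.inr hx3, Or.inr hx3⟩
        · exact ⟨x2, Or.inl hx2, Or.inl hx2⟩
      have hle := le_cliqueNumber hnt hadj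
      have mem_ne : ∀ {A B : Set S} (x : S), x ∈ B → x ∉ A → A ≠ B :=
        fun x hx hnx h => hnx (h ▸ hx)
      have nmu : ∀ {A B : Set S} {x : S}, x ∉ A → x ∉ B → x ∉ A ∪ B :=
        fun hA hB h => h.elim hA hB
      have m1 : I1 ∪ I2 ≠ I1 ∪ I3 := mem_ne x3 (Or.inr hx3) (nmu hx31 hx32)
      have m2 : I1 ∪ I2 ≠ I2 ∪ I3 := mem_ne x3 (Or.inr hx3) (nmu hx31 hx32)
      have m3 : I1 ∪ I3 ≠ I2 ∪ I3 := mem_ne x2 (Or.inl hx2) (nmu hx21 hx23)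
      have hcardA : A.encard = 3 := by
        rw [hA, Set.encard_insert_of_notMem, Set.encard_insert_of_notMem, Set.encard_singleton]
        · rfl
        · simp only [Set.mem_singleton_iff]; exact m3
        · simp only [Set.mem_insert_iff, Set.mem_singleton_iff]; push_neg; exact ⟨m1, m2⟩
      rw [hcardA] at hle
      exact hle

end Case3

section Case2
variable {S : Type*} [Semigroup S]

/-- classification of nontrivial ideals inside the union of the two minimal ideals -/
lemma sub_classif {I1 I2 J : Set S} (h1 : IsMinimalLeftIdeal S I1) (h2 : IsMinimalLeftIdeal S I2)
    (hJli : IsLeftIdeal S J) (hsub : J ⊆ I1 ∪ I2) :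
    J = I1 ∨ J = I2 ∨ J = I1 ∪ I2 := by
  by_cases m1 : (I1 ∩ J).Nonempty <;> by_cases m2 : (I2 ∩ J).Nonempty
  · right; right
    exact Set.Subset.antisymm hsub
      (Set.union_subset (min_subset_of_meet h1 hJli m1) (min_subset_of_meet h2 hJli m2))
  · left
    refine Set.Subset.antisymm ?_ (min_subset_of_meet h1 hJli m1)
    intro x hx
    rcases hsub hx with h | h
    · exact h
    · exact absurd ⟨x, h, hx⟩ m2
  · right; left
    refine Set.Subset.antisymm ?_ (min_subset_of_meet h2 hJli m2)
    intro x hx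
    rcases hsub hx with h | h
    · exact absurd ⟨x, h, hx⟩ m1
    · exact h
  · obtain ⟨x, hx⟩ := hJli.1
    rcases hsub hx with h | h
    · exact absurd ⟨x, h, hx⟩ m1
    · exact absurd ⟨x, h, hx⟩ m2

/-- decomposition of nontrivial ideals not inside the union, assuming the union is maximal -/
lemma nsub_decomp {I1 I2 J : Set S} (h1 : IsMinimalLeftIdeal S I1) (h2 : IsMinimalLeftIdeal S I2)
    (hmax : ∀ K : Set S, IsNontrivialLeftIdeal S K → ¬ (I1 ∪ I2) ⊂ K)
    (hJ : IsNontrivialLeftIdeal S J) (hJU : ¬ J ⊆ I1 ∪ I2) :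
    J = Set.univ \ (I1 ∪ I2) ∨ J = Set.univ \ (I1 ∪ I2) ∪ I1 ∨
      J = Set.univ \ (I1 ∪ I2) ∪ I2 := by
  have hun : J ∪ (I1 ∪ I2) = Set.univ := by
    by_contra h
    refine hmax (J ∪ (I1 ∪ I2)) ⟨li_union hJ.1 (li_union h1.1.1 h2.1.1), h⟩
      ⟨Set.subset_union_right, fun hsub => hJU ?_⟩
    exact fun x hx => hsub (Or.inl hx)
  have hD : Set.univ \ (I1 ∪ I2) ⊆ J := by
    intro x hx
    rcases (hun ▸ Set.mem_univ x : x ∈ J ∪ (I1 ∪ I2)) with h | h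
    · exact h
    · exact absurd h hx.2
  by_cases m1 : (I1 ∩ J).Nonempty <;> by_cases m2 : (I2 ∩ J).Nonempty
  · exfalso
    apply hJ.2
    apply Set.eq_univ_of_univ_subset
    intro x _
    by_cases hxU : x ∈ I1 ∪ I2
    · rcases hxU with h | h
      · exact min_subset_of_meet h1 hJ.1 m1 h
      · exact min_subset_of_meet h2 hJ.1 m2 h
    · exact hD ⟨Set.mem_univ x, hxU⟩
  · right; left
    refine Set.Subset.antisymm ?_ (Set.union_subset hD (min_subset_of_meet h1 hJ.1 m1))
    intro x hx
    by_cases hxU : x ∈ I1 ∪ I2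
    · rcases hxU with h | h
      · exact Or.inr h
      · exact absurd ⟨x, h, hx⟩ m2
    · exact Or.inl ⟨Set.mem_univ x, hxU⟩
  · right; right
    refine Set.Subset.antisymm ?_ (Set.union_subset hD (min_subset_of_meet h2 hJ.1 m2))
    intro x hx
    by_cases hxU : x ∈ I1 ∪ I2
    · rcases hxU with h | h
      · exact absurd ⟨x, h, hx⟩ m1
      · exact Or.inr h
    · exact Or.inl ⟨Set.mem_univ x, hxU⟩
  · left
    refine Set.Subset.antisymm ?_ hD
    intro x hx
    refine ⟨Set.mem_univ x, fun hxU => ?_⟩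
    rcases hxU with h | h
    · exact absurd ⟨x, h, hx⟩ m1
    · exact absurd ⟨x, h, hx⟩ m2

/-- if `(univ \ (I1 ∪ I2)) ∪ I1` is a nontrivial ideal then it is maximal -/
lemma DA_max {I1 I2 : Set S} (h1 : IsMinimalLeftIdeal S I1) (h2 : IsMinimalLeftIdeal S I2)
    (h12 : I1 ≠ I2)
    (hmax : ∀ K : Set S, IsNontrivialLeftIdeal S K → ¬ (I1 ∪ I2) ⊂ K)
    (hD : (Set.univ \ (I1 ∪ I2)).Nonempty)
    (hnt : IsNontrivialLeftIdeal S (Set.univ \ (I1 ∪ I2) ∪ I1)) :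
    IsMaximalLeftIdeal S (Set.univ \ (I1 ∪ I2) ∪ I1) := by
  refine ⟨hnt, fun P hP hLP => ?_⟩
  obtain ⟨d, hd⟩ := hD
  have hPU : ¬ P ⊆ I1 ∪ I2 := fun hsub => hd.2 (hsub (hLP.1 (Or.inl hd)))
  obtain ⟨a, ha⟩ := h1.1.1.1
  rcases nsub_decomp h1 h2 hmax hP hPU with rfl | h | rfl
  · exact (hLP.1 (Or.inr ha)).2 (Or.inl ha)
  · exact hLP.2 (h ▸ le_refl P)
  · rcases hLP.1 (Or.inr ha) with h | h
    · exact h.2 (Or.inl ha)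
    · exact absurd (min_disjoint h1 h2 h12) (Set.nonempty_iff_ne_empty.mp ⟨a, ha, h⟩)

/-- the 3-clique contradiction: three distinct nontrivial ideals all containing a
common nonempty set give clique number ≥ 3 -/
lemma three_le_cliqueNumber {A B C : Set S} (hA : IsNontrivialLeftIdeal S A)
    (hB : IsNontrivialLeftIdeal S B) (hC : IsNontrivialLeftIdeal S C)
    (hAB : A ≠ B) (hAC : A ≠ C) (hBC : B ≠ C)
    {x : S} (hxA : x ∈ A) (hxB : x ∈ B) (hxC : x ∈ C) :
    (3 : ℕ∞) ≤ cliqueNumber S := by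
  have hnt : ∀ E ∈ ({A, B, C} : Set (Set S)), IsNontrivialLeftIdeal S E := by
    rintro E (rfl | rfl | rfl) <;> assumption
  have hadj : ∀ E ∈ ({A, B, C} : Set (Set S)), ∀ F ∈ ({A, B, C} : Set (Set S)),
      E ≠ F → (E ∩ F).Nonempty := by
    rintro E (rfl | rfl | rfl) F (rfl | rfl | rfl) _ <;> exact ⟨x, by assumption, by assumption⟩
  have hcard : ({A, B, C} : Set (Set S)).encard = 3 := by
    rw [Set.encard_insert_of_notMem, Set.encard_pair hBC]
    · rfl
    · simp only [Set.mem_insert_iff, Set.mem_singleton_iff]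
      push_neg
      exact ⟨hAB, hAC⟩
  calc (3 : ℕ∞) = ({A, B, C} : Set (Set S)).encard := hcard.symm
    _ ≤ cliqueNumber S := le_cliqueNumber hnt hadj

lemma case2 (I1 I2 : Set S) (h1 : IsMinimalLeftIdeal S I1) (h2 : IsMinimalLeftIdeal S I2)
    (h12 : I1 ≠ I2) (hM : {I : Set S | IsMinimalLeftIdeal S I} = {I1, I2}) :
    cliqueNumber S = 2 ↔
      (IsMaximalLeftIdeal S (I1 ∪ I2) ∧
        ∀ K : Set S, IsMaximalLeftIdeal S K → K = I1 ∪ I2) := by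
  have d12 : I1 ∩ I2 = ∅ := min_disjoint h1 h2 h12
  obtain ⟨x1, hx1⟩ := h1.1.1.1
  obtain ⟨x2, hx2⟩ := h2.1.1.1
  have hx21 : x2 ∉ I1 := fun h => absurd (d12 ▸ (⟨h, hx2⟩ : x2 ∈ I1 ∩ I2)) (Set.notMem_empty x2)
  have hx12 : x1 ∉ I2 := fun h => absurd (d12 ▸ (⟨hx1, h⟩ : x1 ∈ I1 ∩ I2)) (Set.notMem_empty x1)
  have hUli : IsLeftIdeal S (I1 ∪ I2) := li_union h1.1.1 h2.1.1
  have hI1U : I1 ≠ I1 ∪ I2 := fun h => hx21 ((h ▸ (Or.inr hx2) : x2 ∈ I1))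
  have hI2U : I2 ≠ I1 ∪ I2 := fun h => hx12 ((h ▸ (Or.inl hx1) : x1 ∈ I2))
  constructor
  · -- cliqueNumber = 2 → maximal and unique
    intro hcn
    -- first: the union is not everything
    have hUne : I1 ∪ I2 ≠ Set.univ := by
      intro hU
      -- then the only nontrivial ideals are I1 and I2, and the clique number is ≤ 1
      have hle : cliqueNumber S ≤ 1 := by
        apply cliqueNumber_le
        intro C hC
        rw [Set.encard_le_one_iff]
        intro v w hv hw
        by_contra hvw
        have hadj := hC hv hw hvw
        obtain ⟨x, hxv, hxw⟩ := hadj.2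
        have hclass : ∀ u : {I : Set S // IsNontrivialLeftIdeal S I}, u.1 = I1 ∨ u.1 = I2 := by
          intro u
          rcases sub_classif h1 h2 u.2.1 (hU ▸ Set.subset_univ u.1) with h | h | h
          · exact Or.inl h
          · exact Or.inr h
          · exact absurd (h.trans hU) u.2.2
        rcases hclass v with hv1 | hv1 <;> rcases hclass w with hw1 | hw1
        · exact hvw (Subtype.ext (hv1.trans hw1.symm))
        · exact absurd (d12 ▸ (⟨hv1 ▸ hxv, hw1 ▸ hxw⟩ : x ∈ I1 ∩ I2)) (Set.notMem_empty x)
        · exact absurd (d12 ▸ (⟨hw1 ▸ hxw, hv1 ▸ hxv⟩ : x ∈ I1 ∩ I2)) (Set.notMem_empty x)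
        · exact hvw (Subtype.ext (hv1.trans hw1.symm))
      rw [hcn] at hle
      norm_num at hle
    have hUnt : IsNontrivialLeftIdeal S (I1 ∪ I2) := ⟨hUli, hUne⟩
    have hUmax : IsMaximalLeftIdeal S (I1 ∪ I2) := by
      refine ⟨hUnt, fun K hK hUK => ?_⟩
      have hI1K : I1 ≠ K := by
        intro h
        obtain ⟨y, hyK, hyU⟩ := Set.exists_of_ssubset hUK
        exact hyU (Or.inl (h ▸ hyK))
      have hUK' : I1 ∪ I2 ≠ K := hUK.ne
      have h3 := three_le_cliqueNumber h1.1 hUnt hK hI1U hI1K hUK'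
        hx1 (Or.inl hx1) (hUK.1 (Or.inl hx1))
      rw [hcn] at h3
      norm_num at h3
    refine ⟨hUmax, fun K hK => ?_⟩
    by_contra hKU
    by_cases hsub : K ⊆ I1 ∪ I2
    · rcases sub_classif h1 h2 hK.1.1 hsub with h | h | h
      · rw [h] at hK
        exact hK.2 (I1 ∪ I2) hUnt ⟨Set.subset_union_left, fun hh => hx21 (hh (Or.inr hx2))⟩
      · rw [h] at hK
        exact hK.2 (I1 ∪ I2) hUnt ⟨Set.subset_union_right, fun hh => hx12 (hh (Or.inl hx1))⟩
      · exact hKU h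
    · rcases nsub_decomp h1 h2 hUmax.2 hK.1 hsub with hKD | hKD | hKD
      · -- K = D : then K is a third minimal ideal, contradiction
        have hKmin : IsMinimalLeftIdeal S K := by
          refine ⟨hK.1, fun J hJ hJK => ?_⟩
          have hJne : J.Nonempty := hJ.1
          have hJnU : ¬ J ⊆ I1 ∪ I2 := by
            intro hsub'
            obtain ⟨y, hy⟩ := hJne
            exact ((hKD ▸ hJK.1 hy : y ∈ Set.univ \ (I1 ∪ I2))).2 (hsub' hy)
          have hJnt : IsNontrivialLeftIdeal S J := by
            refine ⟨hJ, fun h => ?_⟩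
            obtain ⟨y, hyK, hyJ⟩ := Set.exists_of_ssubset hJK
            exact hyJ (h ▸ Set.mem_univ y)
          have hun : J ∪ (I1 ∪ I2) = Set.univ := by
            by_contra h
            refine hUmax.2 (J ∪ (I1 ∪ I2)) ⟨li_union hJ hUli, h⟩
              ⟨Set.subset_union_right, fun hs => hJnU (fun x hx => hs (Or.inl hx))⟩
          have hDJ : Set.univ \ (I1 ∪ I2) ⊆ J := by
            intro x hx
            rcases (hun ▸ Set.mem_univ x : x ∈ J ∪ (I1 ∪ I2)) with h | h
            · exact h
            · exact absurd h hx.2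
          exact hJK.2 (hKD ▸ hDJ)
        have hKmem : K ∈ ({I1, I2} : Set (Set S)) := hM ▸ hKmin
        obtain ⟨y, hy⟩ := hK.1.1.1
        rcases hKmem with h | h
        · exact (hKD ▸ (h ▸ hy : y ∈ K) : y ∈ Set.univ \ (I1 ∪ I2)).2 (Or.inl (h ▸ hy))
        · exact (hKD ▸ (h ▸ hy : y ∈ K) : y ∈ Set.univ \ (I1 ∪ I2)).2 (Or.inr (h ▸ hy))
      · -- K = D ∪ I1 : 3-clique {I2, I1 ∪ I2, K}
        obtain ⟨y, hyK, hyU⟩ : ∃ y, y ∈ K ∧ y ∉ I1 ∪ I2 := by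
          obtain ⟨y, hy⟩ := Set.not_subset.mp hsub
          exact ⟨y, hy.1, hy.2⟩
        have hI1K : I1 ⊆ K := hKD ▸ Set.subset_union_right
        have hI1nK : I1 ≠ K := fun h => hyU (Or.inl (h ▸ hyK))
        have h3 := three_le_cliqueNumber h1.1 hUnt hK.1 hI1U hI1nK (fun h => hKU h.symm)
          hx1 (Or.inl hx1) (hI1K hx1)
        rw [hcn] at h3
        norm_num at h3
      · obtain ⟨y, hyK, hyU⟩ : ∃ y, y ∈ K ∧ y ∉ I1 ∪ I2 := by
          obtain ⟨y, hy⟩ := Set.not_subset.mp hsub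
          exact ⟨y, hy.1, hy.2⟩
        have hI2K : I2 ⊆ K := hKD ▸ Set.subset_union_right
        have hI2nK : I2 ≠ K := fun h => hyU (Or.inr (h ▸ hyK))
        have h3 := three_le_cliqueNumber h2.1 hUnt hK.1 hI2U hI2nK (fun h => hKU h.symm)
          hx2 (Or.inr hx2) (hI2K hx2)
        rw [hcn] at h3
        norm_num at h3
  · -- maximal and unique → cliqueNumber = 2
    rintro ⟨hUmax, huniq⟩
    have hUnt := hUmax.1
    apply le_antisymm
    · -- upper bound
      apply cliqueNumber_le
      intro C hC
      -- every vertex is I1, I2 or the union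
      have hclass : ∀ v : {I : Set S // IsNontrivialLeftIdeal S I},
          v.1 = I1 ∨ v.1 = I2 ∨ v.1 = I1 ∪ I2 := by
        intro v
        by_cases hsub : v.1 ⊆ I1 ∪ I2
        · exact sub_classif h1 h2 v.2.1 hsub
        · exfalso
          obtain ⟨y, hyv, hyU⟩ : ∃ y, y ∈ v.1 ∧ y ∉ I1 ∪ I2 := by
            obtain ⟨y, hy⟩ := Set.not_subset.mp hsub
            exact ⟨y, hy.1, hy.2⟩
          have hD : (Set.univ \ (I1 ∪ I2)).Nonempty := ⟨y, Set.mem_univ y, hyU⟩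
          rcases nsub_decomp h1 h2 hUmax.2 v.2 hsub with hKD | hKD | hKD
          · -- v = D : D is maximal, contradicting uniqueness
            have hDmax : IsMaximalLeftIdeal S v.1 := by
              refine ⟨v.2, fun L hL hvL => ?_⟩
              have hLnU : ¬ L ⊆ I1 ∪ I2 := fun hs => hyU (hs (hvL.1 hyv))
              rcases nsub_decomp h1 h2 hUmax.2 hL hLnU with hLD | hLD | hLD
              · exact hvL.2 (by rw [hKD, hLD])
              · have hLmax : IsMaximalLeftIdeal S L := hLD ▸ DA_max h1 h2 h12 hUmax.2 hD (hLD ▸ hL)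
                have := huniq L hLmax
                rw [this] at hLD
                obtain ⟨d, hd⟩ := hD
                have : d ∈ I1 ∪ I2 := hLD ▸ (Or.inl hd : d ∈ Set.univ \ (I1 ∪ I2) ∪ I1)
                exact hd.2 this
              · have hI2I1 : I2 ∪ I1 = I1 ∪ I2 := Set.union_comm I2 I1
                have hmax' : ∀ K : Set S, IsNontrivialLeftIdeal S K → ¬ (I2 ∪ I1) ⊂ K := by
                  rw [hI2I1]; exact hUmax.2
                have hLmax : IsMaximalLeftIdeal S L := by
                  have := DA_max h2 h1 h12.symm hmax' (hI2I1 ▸ hD) (by rw [hI2I1, ← hLD]; exact hL)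
                  rwa [hI2I1, ← hLD] at this
                have := huniq L hLmax
                rw [this] at hLD
                obtain ⟨d, hd⟩ := hD
                have : d ∈ I1 ∪ I2 := hLD ▸ (Or.inl hd : d ∈ Set.univ \ (I1 ∪ I2) ∪ I2)
                exact hd.2 this
            have := huniq v.1 hDmax
            exact hyU (this ▸ hyv)
          · -- v = D ∪ I1 : maximal, contradicting uniqueness
            have hvmax : IsMaximalLeftIdeal S v.1 :=
              hKD ▸ DA_max h1 h2 h12 hUmax.2 hD (hKD ▸ v.2)
            have := huniq v.1 hvmax
            exact hyU (this ▸ hyv)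
          · have hI2I1 : I2 ∪ I1 = I1 ∪ I2 := Set.union_comm I2 I1
            have hmax' : ∀ K : Set S, IsNontrivialLeftIdeal S K → ¬ (I2 ∪ I1) ⊂ K := by
              rw [hI2I1]; exact hUmax.2
            have hvmax : IsMaximalLeftIdeal S v.1 := by
              have := DA_max h2 h1 h12.symm hmax' (hI2I1 ▸ hD) (by rw [hI2I1, ← hKD]; exact v.2)
              rwa [hI2I1, ← hKD] at this
            have := huniq v.1 hvmax
            exact hyU (this ▸ hyv)
      -- C cannot contain vertices with values I1 and I2 simultaneously
      have hnotboth : ¬ ((∃ v ∈ C, v.1 = I1) ∧ (∃ v ∈ C, v.1 = I2)) := by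
        rintro ⟨⟨v, hv, hv1⟩, ⟨w, hw, hw1⟩⟩
        have hvw : v ≠ w := fun h => h12 (hv1 ▸ hw1 ▸ congrArg Subtype.val h)
        obtain ⟨x, hxv, hxw⟩ := (hC hv hw hvw).2
        exact absurd (d12 ▸ (⟨hv1 ▸ hxv, hw1 ▸ hxw⟩ : x ∈ I1 ∩ I2)) (Set.notMem_empty x)
      have key : ∃ a : Set S, IsNontrivialLeftIdeal S a ∧ a ≠ I1 ∪ I2 ∧
          C ⊆ Subtype.val ⁻¹' ({a, I1 ∪ I2} : Set (Set S)) := by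
        by_cases hex : ∃ v ∈ C, v.1 = I1
        · refine ⟨I1, h1.1, hI1U, fun w hw => ?_⟩
          rcases hclass w with h | h | h
          · exact Or.inl h
          · exact absurd ⟨hex, ⟨w, hw, h⟩⟩ hnotboth
          · exact Or.inr h
        · refine ⟨I2, h2.1, hI2U, fun w hw => ?_⟩
          rcases hclass w with h | h | h
          · exact absurd ⟨w, hw, h⟩ hex
          · exact Or.inl h
          · exact Or.inr h
      obtain ⟨a, hant, haU, hCsub⟩ := key
      calc C.encard ≤ (Subtype.val ⁻¹' ({a, I1 ∪ I2} : Set (Set S)) :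
              Set {I : Set S // IsNontrivialLeftIdeal S I}).encard := Set.encard_mono hCsub
        _ = ({a, I1 ∪ I2} : Set (Set S)).encard := by
            apply Set.encard_preimage_of_injective_subset_range Subtype.val_injective
            rw [Subtype.range_coe_subtype]
            rintro E (rfl | rfl)
            · exact hant
            · exact hUnt
        _ = 2 := Set.encard_pair haU
    · -- lower bound
      have hnt : ∀ E ∈ ({I1, I1 ∪ I2} : Set (Set S)), IsNontrivialLeftIdeal S E := by
        rintro E (rfl | rfl)
        · exact h1.1
        · exact hUnt
      have hadj : ∀ E ∈ ({I1, I1 ∪ I2} : Set (Set S)), ∀ F ∈ ({I1, I1 ∪ I2} : Set (Set S)),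
          E ≠ F → (E ∩ F).Nonempty := by
        rintro E (rfl | rfl) F (rfl | rfl) _ <;>
          exact ⟨x1, by simp [hx1], by simp [hx1]⟩
      have := le_cliqueNumber hnt hadj
      rwa [Set.encard_pair hI1U] at this

end Case2

section Case4
variable {S : Type*} [Semigroup S]

lemma case_ge4 (n : ℕ) (hn : 4 ≤ n)
    (hcard : {I : Set S | IsMinimalLeftIdeal S I}.encard = n) :
    cliqueNumber S ≠ n := by
  set M : Set (Set S) := {I : Set S | IsMinimalLeftIdeal S I} with hMdef
  -- helper: M minus any small set is nonempty
  have hbig : ∀ T : Set (Set S), T.encard ≤ 3 → (M \ T).Nonempty := by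
    intro T hT
    rw [Set.nonempty_iff_ne_empty]
    intro h
    have hsub : M ⊆ T := by
      intro x hx
      by_contra hxT
      exact absurd (h ▸ (⟨hx, hxT⟩ : x ∈ M \ T)) (Set.notMem_empty x)
    have := (Set.encard_mono hsub).trans hT
    rw [hcard] at this
    have : n ≤ 3 := by exact_mod_cast this
    omega
  have henc1 : ∀ a : Set S, ({a} : Set (Set S)).encard ≤ 3 := by
    intro a; rw [Set.encard_singleton]; norm_num
  have henc2 : ∀ a b : Set S, ({a, b} : Set (Set S)).encard ≤ 3 := by
    intro a b
    refine (Set.encard_insert_le _ _).trans ?_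
    rw [Set.encard_singleton]; norm_num
  have henc3 : ∀ a b c : Set S, ({a, b, c} : Set (Set S)).encard ≤ 3 := by
    intro a b c
    refine (Set.encard_insert_le _ _).trans ?_
    refine (add_le_add_left (Set.encard_insert_le _ _) 1).trans ?_
    rw [Set.encard_singleton]; norm_num
  obtain ⟨I1, hI1⟩ := hbig ∅ (by rw [Set.encard_empty]; norm_num)
  have hI1 : I1 ∈ M := hI1.1
  obtain ⟨I2, hI2, hI2'⟩ := hbig {I1} (henc1 I1)
  obtain ⟨I3, hI3, hI3'⟩ := hbig {I1, I2} (henc2 I1 I2)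
  simp only [Set.mem_singleton_iff] at hI2'
  simp only [Set.mem_insert_iff, Set.mem_singleton_iff] at hI3'
  push_neg at hI3'
  obtain ⟨x1, hx1⟩ := hI1.1.1.1
  -- elements of M meeting I1 ∪ J must be I1 or J
  have hmeet : ∀ J ∈ M, ∀ K ∈ M, K ⊆ I1 ∪ J → K = I1 ∨ K = J := by
    intro J hJ K hK hKsub
    obtain ⟨y, hy⟩ := hK.1.1.1
    rcases hKsub hy with h | h
    · left
      by_contra hne
      exact absurd (min_disjoint hK hI1 hne ▸ (⟨hy, h⟩ : y ∈ K ∩ I1)) (Set.notMem_empty y)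
    · right
      by_contra hne
      exact absurd (min_disjoint hK hJ hne ▸ (⟨hy, h⟩ : y ∈ K ∩ J)) (Set.notMem_empty y)
  set A : Set (Set S) := insert (I1 ∪ I2 ∪ I3) ((fun J => I1 ∪ J) '' M) with hAdef
  have heqK : ∀ K ∈ M, ∀ y ∈ K, ∀ L ∈ M, y ∈ L → K = L := by
    intro K hK y hy L hL hyL
    by_contra hne
    exact absurd (min_disjoint hK hL hne ▸ (⟨hy, hyL⟩ : y ∈ K ∩ L)) (Set.notMem_empty y)
  have hnt : ∀ E ∈ A, IsNontrivialLeftIdeal S E := by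
    rintro E (rfl | ⟨J, hJ, rfl⟩)
    · obtain ⟨K, hK, hK'⟩ := hbig {I1, I2, I3} (henc3 I1 I2 I3)
      refine ⟨li_union (li_union hI1.1.1 hI2.1.1) hI3.1.1, fun h => ?_⟩
      obtain ⟨y, hy⟩ := hK.1.1.1
      have hy' : y ∈ I1 ∪ I2 ∪ I3 := h ▸ Set.mem_univ y
      rcases hy' with (h' | h') | h'
      · exact hK' (Or.inl (heqK K hK y hy I1 hI1 h'))
      · exact hK' (Or.inr (Or.inl (heqK K hK y hy I2 hI2 h')))
      · exact hK' (Or.inr (Or.inr (heqK K hK y hy I3 hI3 h')))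
    · obtain ⟨K, hK, hK'⟩ := hbig {I1, J} (henc2 I1 J)
      refine ⟨li_union hI1.1.1 hJ.1.1, fun h => ?_⟩
      have h' : I1 ∪ J = Set.univ := h
      obtain ⟨y, hy⟩ := hK.1.1.1
      have hy' : y ∈ I1 ∪ J := h' ▸ Set.mem_univ y
      rcases hy' with h'' | h''
      · exact hK' (Or.inl (heqK K hK y hy I1 hI1 h''))
      · exact hK' (Or.inr (heqK K hK y hy J hJ h''))
  have hI1sub : ∀ E ∈ A, I1 ⊆ E := by
    rintro E (rfl | ⟨J, hJ, rfl⟩)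
    · exact Set.subset_union_left.trans Set.subset_union_left
    · exact Set.subset_union_left
  have hadj : ∀ E ∈ A, ∀ F ∈ A, E ≠ F → (E ∩ F).Nonempty :=
    fun E hE F hF _ => ⟨x1, hI1sub E hE hx1, hI1sub F hF hx1⟩
  have hinj : Set.InjOn (fun J => I1 ∪ J) M := by
    intro J hJ J' hJ' heq0
    have heq : I1 ∪ J = I1 ∪ J' := heq0
    by_contra hne
    have hd : J ∩ J' = ∅ := min_disjoint hJ hJ' hne
    by_cases hJ1 : J = I1
    · subst hJ1
      rw [Set.union_self] at heq
      obtain ⟨y, hy⟩ := hJ'.1.1.1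
      rcases (heq ▸ (Or.inr hy : y ∈ J ∪ J') : y ∈ J) with h
      exact absurd (hd ▸ (⟨h, hy⟩ : y ∈ J ∩ J')) (Set.notMem_empty y)
    · have hdJ1 : J ∩ I1 = ∅ := min_disjoint hJ hI1 hJ1
      obtain ⟨y, hy⟩ := hJ.1.1.1
      rcases (heq ▸ (Or.inr hy : y ∈ I1 ∪ J) : y ∈ I1 ∪ J') with h | h
      · exact absurd (hdJ1 ▸ (⟨hy, h⟩ : y ∈ J ∩ I1)) (Set.notMem_empty y)
      · exact absurd (hd ▸ (⟨hy, h⟩ : y ∈ J ∩ J')) (Set.notMem_empty y)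
  have hnotmem : (I1 ∪ I2 ∪ I3) ∉ (fun J => I1 ∪ J) '' M := by
    rintro ⟨J, hJ, heq0⟩
    have heq : I1 ∪ J = I1 ∪ I2 ∪ I3 := heq0
    have hsub2 : I2 ⊆ I1 ∪ J := by rw [heq]; intro x hx; exact Or.inl (Or.inr hx)
    have hsub3 : I3 ⊆ I1 ∪ J := by rw [heq]; intro x hx; exact Or.inr hx
    have h2 : I2 = J := by
      rcases hmeet J hJ I2 hI2 hsub2 with h | h
      · exact absurd h hI2'
      · exact h
    have h3 : I3 = J := by
      rcases hmeet J hJ I3 hI3 hsub3 with h | h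
      · exact absurd h hI3'.1
      · exact h
    exact hI3'.2 (h3.trans h2.symm)
  have hcardA : A.encard = (n : ℕ∞) + 1 := by
    rw [hAdef, Set.encard_insert_of_notMem hnotmem, hinj.encard_image, hcard]
  intro hcn
  have := le_cliqueNumber hnt hadj
  rw [hcardA, hcn] at this
  have : (n : ℕ∞) + 1 ≤ (n : ℕ∞) := this
  have hfin : (n : ℕ∞) ≠ ⊤ := by simp
  have := ENat.add_one_le_iff hfin |>.mp this
  exact lt_irrefl _ this

end Case4

/-- Let `S` have exactly `n` minimal left ideals, `2 ≤ n < ∞`. Then the clique number of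
`Γ(S)` equals `n` iff either `n = 3` and `S` is the union of its three minimal left
ideals, or `n = 2` and the union of the two minimal left ideals is the unique maximal
left ideal of `S`. -/
theorem cliqueNumber_eq_iff (S : Type*) [Semigroup S] (n : ℕ) (hn : 2 ≤ n)
    (hcard : {I : Set S | IsMinimalLeftIdeal S I}.encard = n) :
    cliqueNumber S = n ↔
      ((n = 3 ∧ ⋃₀ {I : Set S | IsMinimalLeftIdeal S I} = Set.univ) ∨
        (n = 2 ∧ IsMaximalLeftIdeal S (⋃₀ {I : Set S | IsMinimalLeftIdeal S I}) ∧
          ∀ K : Set S, IsMaximalLeftIdeal S K →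
            K = ⋃₀ {I : Set S | IsMinimalLeftIdeal S I})) := by
  rcases Nat.lt_or_ge n 4 with h4 | h4
  · interval_cases n
    · -- n = 2
      obtain ⟨a, b, hab, hMeq⟩ := Set.encard_eq_two.mp (by exact_mod_cast hcard)
      have ha : IsMinimalLeftIdeal S a := by
        have h : a ∈ {I : Set S | IsMinimalLeftIdeal S I} := by rw [hMeq]; exact Or.inl rfl
        exact h
      have hb : IsMinimalLeftIdeal S b := by
        have h : b ∈ {I : Set S | IsMinimalLeftIdeal S I} := by rw [hMeq]; exact Or.inr rfl
        exact h
      rw [hMeq, Set.sUnion_pair]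
      have hiff := case2 a b ha hb hab hMeq
      constructor
      · intro h
        right
        exact ⟨rfl, hiff.mp (by exact_mod_cast h)⟩
      · rintro (⟨h23, -⟩ | ⟨-, hmax, huniq⟩)
        · exact absurd h23 (by omega)
        · have h := hiff.mpr ⟨hmax, huniq⟩
          exact_mod_cast h
    · -- n = 3
      obtain ⟨a, b, c, hab, hac, hbc, hMeq⟩ := Set.encard_eq_three.mp (by exact_mod_cast hcard)
      have ha : IsMinimalLeftIdeal S a := by
        have h : a ∈ {I : Set S | IsMinimalLeftIdeal S I} := by rw [hMeq]; exact Or.inl rfl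
        exact h
      have hb : IsMinimalLeftIdeal S b := by
        have h : b ∈ {I : Set S | IsMinimalLeftIdeal S I} := by
          rw [hMeq]; exact Or.inr (Or.inl rfl)
        exact h
      have hc : IsMinimalLeftIdeal S c := by
        have h : c ∈ {I : Set S | IsMinimalLeftIdeal S I} := by
          rw [hMeq]; exact Or.inr (Or.inr rfl)
        exact h
      rw [hMeq]
      have hU : ⋃₀ ({a, b, c} : Set (Set S)) = a ∪ b ∪ c := by
        rw [Set.sUnion_insert, Set.sUnion_pair, Set.union_assoc]
      rw [hU]
      have hiff := case3 a b c ha hb hc hab hac hbc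
      constructor
      · intro h
        left
        exact ⟨rfl, hiff.mp (by exact_mod_cast h)⟩
      · rintro (⟨-, hU'⟩ | ⟨h32, -⟩)
        · have h := hiff.mpr hU'
          exact_mod_cast h
        · exact absurd h32 (by omega)
  · constructor
    · intro h
      exact absurd h (case_ge4 n h4 hcard)
    · rintro (⟨h3, -⟩ | ⟨h2, -⟩) <;> omega
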